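/- arXiv:1904.08728 — 2 statements merged into one kernel-verified Lean document; each statement's English description precedes it below -/
import Mathlib

section
/- Let A, B ∈ ℂ with A ≠ 0 and B ≠ 0, and let F = A·x₂³ + x₀x₃² + x₁²x₄ - x₀x₂x₄ + B·x₁x₂x₃. A diagonal matrix diag(λ₀,λ₁,λ₂,λ₃,λ₄) ∈ SL(5,ℂ) satisfies F(λ₀x₀,...,λ₄x₄) = F(x₀,...,x₄) if and only if there exists λ ∈ ℂ* such that (λ₀,λ₁,λ₂,λ₃,λ₄) = (λ²,λ,1,λ⁻¹,λ⁻²). -/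
/-- For `A, B ≠ 0` and `F = A x₂³ + x₀x₃² + x₁²x₄ - x₀x₂x₄ + B x₁x₂x₃`, a diagonal
matrix `diag(λ₀,...,λ₄) ∈ SL(5,ℂ)` fixes `F` under substitution iff it is of the
form `diag(λ²,λ,1,λ⁻¹,λ⁻²)` for some `λ ∈ ℂ*`. -/
theorem stmt_6 (A B : ℂ) (hA : A ≠ 0) (hB : B ≠ 0) (l : Fin 5 → ℂ)
    (hdet : l 0 * l 1 * l 2 * l 3 * l 4 = 1) :
    (∀ x : Fin 5 → ℂ,
        A * (l 2 * x 2) ^ 3 + (l 0 * x 0) * (l 3 * x 3) ^ 2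
          + (l 1 * x 1) ^ 2 * (l 4 * x 4) - (l 0 * x 0) * (l 2 * x 2) * (l 4 * x 4)
          + B * (l 1 * x 1) * (l 2 * x 2) * (l 3 * x 3) =
        A * x 2 ^ 3 + x 0 * x 3 ^ 2 + x 1 ^ 2 * x 4 - x 0 * x 2 * x 4
          + B * x 1 * x 2 * x 3) ↔
      ∃ c : ℂ, c ≠ 0 ∧ l = ![c ^ 2, c, 1, c⁻¹, (c ^ 2)⁻¹] := by
  constructor
  · intro h
    have e1 : A * (l 2) ^ 3 = A := by
      have := h ![0, 0, 1, 0, 0]; simpa using this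
    have e2 : l 0 * (l 3) ^ 2 = 1 := by
      have := h ![1, 0, 0, 1, 0]; simpa using this
    have e3 : (l 1) ^ 2 * l 4 = 1 := by
      have := h ![0, 1, 0, 0, 1]; simpa using this
    have h4 := h ![1, 0, 1, 0, 1]
    simp only [Matrix.cons_val_zero, Matrix.cons_val_one, Matrix.head_cons] at h4
    have e4 : l 0 * l 2 * l 4 = 1 := by
      simp at h4
      linear_combination e1 - h4
    have h5 := h ![0, 1, 1, 1, 0]
    have e5 : l 1 * l 2 * l 3 = 1 := by
      simp at h5
      have hB' : B * (l 1 * l 2 * l 3) = B * 1 := by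
        linear_combination h5 - e1
      simpa using mul_left_cancel₀ hB hB'
    have h04 : l 0 * l 4 = 1 := by
      linear_combination hdet - l 0 * l 4 * e5
    have h2 : l 2 = 1 := by
      linear_combination e4 - l 2 * h04
    have hl1 : l 1 ≠ 0 := by
      intro hz
      rw [hz] at e3; simp at e3
    have hl13 : l 1 * l 3 = 1 := by
      rw [h2] at e5; linear_combination e5
    have hl3 : l 3 = (l 1)⁻¹ := by
      field_simp
      linear_combination hl13
    have hl0 : l 0 = (l 1) ^ 2 := by
      rw [hl3] at e2
      field_simp at e2
      linear_combination e2
    have hl4 : l 4 = ((l 1) ^ 2)⁻¹ := by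
      field_simp
      linear_combination e3
    refine ⟨l 1, hl1, ?_⟩
    funext i
    fin_cases i
    · simpa using hl0
    · simp
    · simpa using h2
    · simpa using hl3
    · simpa using hl4
  · rintro ⟨c, hc, rfl⟩
    intro x
    simp only [Matrix.cons_val_zero, Matrix.cons_val_one, Matrix.head_cons,
      Matrix.cons_val_two, Matrix.tail_cons, Matrix.cons_val_three,
      Matrix.cons_val_four]
    have hc2 : (c : ℂ) ^ 2 ≠ 0 := pow_ne_zero _ hc
    field_simp
end

section
/- Suppose a₀, a₁, a₂, a₃, a₄ ∈ ℂ with a₁, a₂, a₃, a₄ all nonzero and 4a₀a₁a₂ + a₃a₄² = 0. Then there exist s₀, s₁, s₂, s₃, s₄ ∈ ℂ* satisfying a₁s₀s₃² = 1, a₂s₁²s₄ = 1, a₃s₀s₂s₄ = -1, and 4a₀s₂ = a₄²s₁²s₃². -/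
/-- If `a₁,a₂,a₃,a₄ ≠ 0` and `4a₀a₁a₂ + a₃a₄² = 0`, then there exist
`s₀,...,s₄ ∈ ℂ*` with `a₁s₀s₃² = 1`, `a₂s₁²s₄ = 1`, `a₃s₀s₂s₄ = -1`, and
`4a₀s₂ = a₄²s₁²s₃²`. -/
theorem stmt_17 (a0 a1 a2 a3 a4 : ℂ)
    (h1 : a1 ≠ 0) (h2 : a2 ≠ 0) (h3 : a3 ≠ 0) (h4 : a4 ≠ 0)
    (h : 4 * a0 * a1 * a2 + a3 * a4 ^ 2 = 0) :
    ∃ s0 s1 s2 s3 s4 : ℂ,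
      s0 ≠ 0 ∧ s1 ≠ 0 ∧ s2 ≠ 0 ∧ s3 ≠ 0 ∧ s4 ≠ 0 ∧
      a1 * s0 * s3 ^ 2 = 1 ∧ a2 * s1 ^ 2 * s4 = 1 ∧
      a3 * s0 * s2 * s4 = -1 ∧ 4 * a0 * s2 = a4 ^ 2 * s1 ^ 2 * s3 ^ 2 := by
  refine ⟨a1⁻¹, 1, -(a1 * a2) / a3, 1, a2⁻¹,
    inv_ne_zero h1, one_ne_zero, ?_, one_ne_zero, inv_ne_zero h2, ?_, ?_, ?_, ?_⟩
  · exact div_ne_zero (neg_ne_zero.mpr (mul_ne_zero h1 h2)) h3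
  · field_simp
  · field_simp
  · field_simp
  · field_simp
    linear_combination -h
end
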